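/- Let A ∈ ℂ^{m×n} with SVD A = UΣV*, target rank r < min(m,n), and let R ∈ ℝ^{d×n} be a random matrix such that, with probability at least 1−δ, both ‖R‖² ≤ max(e²μ, log(2d/δ) − μ) with μ = nα/d, and σ_min(RV₁)² ≥ 1−ε, where V₁ consists of the top r right singular vectors and ε ∈ (0,1). Then with probability at least 1−δ, for Y = AR^T, ‖(I − P_Y)A‖ ≤ σ_{r+1}(A) · √(1 + (1/(1−ε)) · max(e²nα/d, log(2d/δ) − nα/d)). -/

import Mathlib

open MeasureTheory Matrix

/-- Euclidean norm of a real vector. -/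
noncomputable def vnormR {α : Type*} [Fintype α] (x : α → ℝ) : ℝ :=
  Real.sqrt (∑ i, x i ^ 2)

/-- Euclidean norm of a complex vector. -/
noncomputable def vnormC {α : Type*} [Fintype α] (x : α → ℂ) : ℝ :=
  Real.sqrt (∑ i, ‖x i‖ ^ 2)

/-- Spectral norm of a real matrix. -/
noncomputable def specNorm {α β : Type*} [Fintype α] [Fintype β]
    (A : Matrix α β ℝ) : ℝ :=
  sSup {c : ℝ | ∃ x : β → ℝ, vnormR x = 1 ∧ c = vnormR (A.mulVec x)}

/-- Spectral norm of a complex matrix. -/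
noncomputable def specNormC {α β : Type*} [Fintype α] [Fintype β]
    (A : Matrix α β ℂ) : ℝ :=
  sSup {c : ℝ | ∃ x : β → ℂ, vnormC x = 1 ∧ c = vnormC (A.mulVec x)}

/-- Smallest singular value of a complex matrix. -/
noncomputable def sigmaMinC {α β : Type*} [Fintype α] [Fintype β]
    (B : Matrix α β ℂ) : ℝ :=
  sInf {c : ℝ | ∃ x : β → ℂ, vnormC x = 1 ∧ c = vnormC (B.mulVec x)}

section helpers
variable {α β : Type*} [Fintype α] [Fintype β]

lemma vnormC_eq_norm (x : α → ℂ) :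
    vnormC x = ‖(WithLp.equiv 2 (α → ℂ)).symm x‖ := by
  rw [EuclideanSpace.norm_eq]; rfl

lemma vnormR_eq_norm (x : α → ℝ) :
    vnormR x = ‖(WithLp.equiv 2 (α → ℝ)).symm x‖ := by
  rw [EuclideanSpace.norm_eq]
  simp [vnormR, Real.norm_eq_abs, sq_abs]

lemma vnormC_nonneg (x : α → ℂ) : 0 ≤ vnormC x := Real.sqrt_nonneg _
lemma vnormR_nonneg (x : α → ℝ) : 0 ≤ vnormR x := Real.sqrt_nonneg _

lemma vnormC_sq (x : α → ℂ) : vnormC x ^ 2 = ∑ i, ‖x i‖ ^ 2 :=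
  Real.sq_sqrt (Finset.sum_nonneg fun _ _ => sq_nonneg _)
lemma vnormR_sq (x : α → ℝ) : vnormR x ^ 2 = ∑ i, x i ^ 2 :=
  Real.sq_sqrt (Finset.sum_nonneg fun _ _ => sq_nonneg _)

lemma vnormC_eq_zero {x : α → ℂ} (h : vnormC x = 0) : x = 0 := by
  rw [vnormC_eq_norm, norm_eq_zero] at h
  exact congrArg (WithLp.equiv 2 (α → ℂ)) h

lemma vnormC_smul (c : ℂ) (x : α → ℂ) : vnormC (c • x) = ‖c‖ * vnormC x := by
  rw [vnormC_eq_norm, vnormC_eq_norm, ← norm_smul]; rfl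

lemma vnormR_smul (c : ℝ) (x : α → ℝ) : vnormR (c • x) = ‖c‖ * vnormR x := by
  rw [vnormR_eq_norm, vnormR_eq_norm, ← norm_smul]; rfl

lemma vnormC_sub_le (x y : α → ℂ) : vnormC (x - y) ≤ vnormC x + vnormC y := by
  rw [vnormC_eq_norm, vnormC_eq_norm, vnormC_eq_norm]
  exact norm_sub_le _ _

lemma vnormC_zero : vnormC (0 : α → ℂ) = 0 := by simp [vnormC]
lemma vnormR_zero : vnormR (0 : α → ℝ) = 0 := by simp [vnormR]

lemma le_of_sq_le_sq' {a b : ℝ} (ha : 0 ≤ a) (hb : 0 ≤ b) (h : a ^ 2 ≤ b ^ 2) : a ≤ b := by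
  nlinarith

-- Cauchy-Schwarz, real part
lemma dot_re_le (x y : α → ℂ) : (star x ⬝ᵥ y).re ≤ vnormC x * vnormC y := by
  have h := norm_inner_le_norm (𝕜 := ℂ)
    ((WithLp.equiv 2 (α → ℂ)).symm x) ((WithLp.equiv 2 (α → ℂ)).symm y)
  rw [show inner ℂ ((WithLp.equiv 2 (α → ℂ)).symm x) ((WithLp.equiv 2 (α → ℂ)).symm y) = star x ⬝ᵥ y from dotProduct_comm _ _] at h
  calc (star x ⬝ᵥ y).re ≤ ‖star x ⬝ᵥ y‖ := Complex.re_le_norm _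
    _ ≤ _ := by rw [vnormC_eq_norm, vnormC_eq_norm]; exact h

lemma dotR_le (x y : α → ℝ) : x ⬝ᵥ y ≤ vnormR x * vnormR y := by
  have h := norm_inner_le_norm (𝕜 := ℝ)
    ((WithLp.equiv 2 (α → ℝ)).symm x) ((WithLp.equiv 2 (α → ℝ)).symm y)
  rw [show inner ℝ ((WithLp.equiv 2 (α → ℝ)).symm x) ((WithLp.equiv 2 (α → ℝ)).symm y) = x ⬝ᵥ y from dotProduct_comm _ _] at h
  calc x ⬝ᵥ y ≤ ‖x ⬝ᵥ y‖ := le_abs_self _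
    _ ≤ _ := by rw [vnormR_eq_norm, vnormR_eq_norm]; exact h

lemma dot_star_self (x : α → ℂ) : (star x ⬝ᵥ x).re = vnormC x ^ 2 := by
  rw [vnormC_sq, dotProduct, Complex.re_sum]
  congr 1; ext i
  simp [← Complex.normSq_eq_norm_sq, Complex.normSq_apply, Complex.mul_re]

lemma dotR_self (x : α → ℝ) : x ⬝ᵥ x = vnormR x ^ 2 := by
  rw [vnormR_sq, dotProduct]
  exact Finset.sum_congr rfl fun i _ => (sq (x i)).symm

end helpers


section op
variable {α β : Type*} [Fintype α] [Fintype β]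

-- Frobenius-type bound
lemma mulVec_le_frobC (M : Matrix α β ℂ) (x : β → ℂ) :
    vnormC (M.mulVec x) ≤ Real.sqrt (∑ i, ∑ j, ‖M i j‖ ^ 2) * vnormC x := by
  have hrow : ∀ i, ‖(M.mulVec x) i‖ ≤ vnormC (M i) * vnormC x := by
    intro i
    have h := norm_inner_le_norm (𝕜 := ℂ)
      ((WithLp.equiv 2 (β → ℂ)).symm (star (M i))) ((WithLp.equiv 2 (β → ℂ)).symm x)
    rw [show inner ℂ ((WithLp.equiv 2 (β → ℂ)).symm (star (M i))) ((WithLp.equiv 2 (β → ℂ)).symm x) = star (star (M i)) ⬝ᵥ x from dotProduct_comm _ _, star_star] at h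
    have : (M.mulVec x) i = M i ⬝ᵥ x := rfl
    rw [this]
    refine le_trans h ?_
    rw [vnormC_eq_norm, vnormC_eq_norm]
    have he : ‖(WithLp.equiv 2 (β → ℂ)).symm (star (M i))‖ = ‖(WithLp.equiv 2 (β → ℂ)).symm (M i)‖ := by
      rw [EuclideanSpace.norm_eq, EuclideanSpace.norm_eq]
      congr 1; exact Finset.sum_congr rfl fun j _ => by simp
    rw [he]
  have hsq : vnormC (M.mulVec x) ^ 2 ≤ (∑ i, ∑ j, ‖M i j‖ ^ 2) * vnormC x ^ 2 := by
    rw [vnormC_sq, Finset.sum_mul]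
    refine Finset.sum_le_sum fun i _ => ?_
    have h1 : ‖(M.mulVec x) i‖ ^ 2 ≤ (vnormC (M i) * vnormC x) ^ 2 := by
      apply pow_le_pow_left₀ (norm_nonneg _) (hrow i)
    refine h1.trans ?_
    rw [mul_pow, vnormC_sq]
  have h0 : 0 ≤ Real.sqrt (∑ i, ∑ j, ‖M i j‖ ^ 2) * vnormC x :=
    mul_nonneg (Real.sqrt_nonneg _) (vnormC_nonneg _)
  refine le_of_sq_le_sq' (vnormC_nonneg _) h0 ?_
  rw [mul_pow, Real.sq_sqrt (Finset.sum_nonneg fun _ _ => Finset.sum_nonneg fun _ _ => sq_nonneg _)]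
  exact hsq

lemma mulVec_le_frobR (M : Matrix α β ℝ) (x : β → ℝ) :
    vnormR (M.mulVec x) ≤ Real.sqrt (∑ i, ∑ j, (M i j) ^ 2) * vnormR x := by
  have hrow : ∀ i, |(M.mulVec x) i| ≤ vnormR (M i) * vnormR x := by
    intro i
    have h := norm_inner_le_norm (𝕜 := ℝ)
      ((WithLp.equiv 2 (β → ℝ)).symm (M i)) ((WithLp.equiv 2 (β → ℝ)).symm x)
    rw [show inner ℝ ((WithLp.equiv 2 (β → ℝ)).symm (M i)) ((WithLp.equiv 2 (β → ℝ)).symm x) = M i ⬝ᵥ x from dotProduct_comm _ _] at h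
    have : (M.mulVec x) i = M i ⬝ᵥ x := rfl
    rw [this]
    refine le_trans h ?_
    rw [vnormR_eq_norm, vnormR_eq_norm]
  have hsq : vnormR (M.mulVec x) ^ 2 ≤ (∑ i, ∑ j, (M i j) ^ 2) * vnormR x ^ 2 := by
    rw [vnormR_sq, Finset.sum_mul]
    refine Finset.sum_le_sum fun i _ => ?_
    have h1 : (M.mulVec x i) ^ 2 ≤ (vnormR (M i) * vnormR x) ^ 2 := by
      rw [← sq_abs]
      apply pow_le_pow_left₀ (abs_nonneg _) (hrow i)
    refine h1.trans ?_
    rw [mul_pow, vnormR_sq]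
  have h0 : 0 ≤ Real.sqrt (∑ i, ∑ j, (M i j) ^ 2) * vnormR x :=
    mul_nonneg (Real.sqrt_nonneg _) (vnormR_nonneg _)
  refine le_of_sq_le_sq' (vnormR_nonneg _) h0 ?_
  rw [mul_pow, Real.sq_sqrt (by positivity)]
  exact hsq

lemma specNormC_le (M : Matrix α β ℂ) {c : ℝ} (hc : 0 ≤ c)
    (h : ∀ x : β → ℂ, vnormC x = 1 → vnormC (M.mulVec x) ≤ c) :
    specNormC M ≤ c :=
  Real.sSup_le (by rintro _ ⟨x, hx, rfl⟩; exact h x hx) hc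

lemma le_specNormC (M : Matrix α β ℂ) (x : β → ℂ) (hx : vnormC x = 1) :
    vnormC (M.mulVec x) ≤ specNormC M := by
  apply le_csSup
  · refine ⟨Real.sqrt (∑ i, ∑ j, ‖M i j‖ ^ 2), ?_⟩
    rintro _ ⟨y, hy, rfl⟩
    simpa [hy] using mulVec_le_frobC M y
  · exact ⟨x, hx, rfl⟩

lemma le_specNormR (M : Matrix α β ℝ) (x : β → ℝ) (hx : vnormR x = 1) :
    vnormR (M.mulVec x) ≤ specNorm M := by
  apply le_csSup
  · refine ⟨Real.sqrt (∑ i, ∑ j, (M i j) ^ 2), ?_⟩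
    rintro _ ⟨y, hy, rfl⟩
    simpa [hy] using mulVec_le_frobR M y
  · exact ⟨x, hx, rfl⟩

lemma unit_exists [Nonempty β] : ∃ x : β → ℂ, vnormC x = 1 := by
  classical
  obtain ⟨j0⟩ := ‹Nonempty β›
  refine ⟨fun j => if j = j0 then 1 else 0, ?_⟩
  rw [vnormC]
  have : (∑ j, ‖(if j = j0 then (1:ℂ) else 0)‖ ^ 2) = 1 := by
    rw [Finset.sum_eq_single j0]
    · simp
    · intro b _ hb; simp [hb]
    · intro h; exact absurd (Finset.mem_univ j0) h
  rw [this]; exact Real.sqrt_one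

lemma unit_existsR [Nonempty β] : ∃ x : β → ℝ, vnormR x = 1 := by
  classical
  obtain ⟨j0⟩ := ‹Nonempty β›
  refine ⟨fun j => if j = j0 then 1 else 0, ?_⟩
  rw [vnormR]
  have : (∑ j, (if j = j0 then (1:ℝ) else 0) ^ 2) = 1 := by
    rw [Finset.sum_eq_single j0]
    · simp
    · intro b _ hb; simp [hb]
    · intro h; exact absurd (Finset.mem_univ j0) h
  rw [this]; exact Real.sqrt_one

lemma specNormC_nonneg [Nonempty β] (M : Matrix α β ℂ) : 0 ≤ specNormC M := by
  obtain ⟨x, hx⟩ := unit_exists (β := β)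
  exact (vnormC_nonneg _).trans (le_specNormC M x hx)

lemma specNormR_nonneg [Nonempty β] (M : Matrix α β ℝ) : 0 ≤ specNorm M := by
  obtain ⟨x, hx⟩ := unit_existsR (β := β)
  exact (vnormR_nonneg _).trans (le_specNormR M x hx)

lemma specNormC_mulVec_le [Nonempty β] (M : Matrix α β ℂ) (x : β → ℂ) :
    vnormC (M.mulVec x) ≤ specNormC M * vnormC x := by
  rcases eq_or_ne (vnormC x) 0 with h0 | h0
  · rw [vnormC_eq_zero h0, Matrix.mulVec_zero, vnormC_zero, vnormC_zero, mul_zero]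
  · have hpos : 0 < vnormC x := lt_of_le_of_ne (vnormC_nonneg x) (Ne.symm h0)
    set y : β → ℂ := ((vnormC x)⁻¹ : ℝ) • x with hy
    have hyn : vnormC y = 1 := by
      rw [hy, show ((vnormC x)⁻¹ : ℝ) • x = (((vnormC x)⁻¹ : ℝ) : ℂ) • x by
        ext j; simp [Complex.real_smul]]
      rw [vnormC_smul]
      simp [Complex.norm_real, Real.norm_eq_abs, abs_inv, abs_of_pos hpos, inv_mul_cancel₀ h0]
    have h1 := le_specNormC M y hyn
    rw [hy, show M.mulVec ((((vnormC x)⁻¹ : ℝ)) • x) = (((vnormC x)⁻¹ : ℝ) : ℂ) • M.mulVec x by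
      rw [show ((vnormC x)⁻¹ : ℝ) • x = (((vnormC x)⁻¹ : ℝ) : ℂ) • x by ext j; simp [Complex.real_smul]]
      exact Matrix.mulVec_smul M _ x] at h1
    rw [vnormC_smul] at h1
    rw [Complex.norm_real, Real.norm_eq_abs, abs_of_pos (inv_pos.mpr hpos)] at h1
    calc vnormC (M.mulVec x) = (vnormC x) * ((vnormC x)⁻¹ * vnormC (M.mulVec x)) := by
          field_simp
      _ ≤ (vnormC x) * specNormC M := by
          exact mul_le_mul_of_nonneg_left h1 (le_of_lt hpos)
      _ = specNormC M * vnormC x := mul_comm _ _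

lemma specNormR_mulVec_le [Nonempty β] (M : Matrix α β ℝ) (x : β → ℝ) :
    vnormR (M.mulVec x) ≤ specNorm M * vnormR x := by
  rcases eq_or_ne (vnormR x) 0 with h0 | h0
  · have : x = 0 := by
      rw [vnormR_eq_norm, norm_eq_zero] at h0
      exact congrArg (WithLp.equiv 2 (β → ℝ)) h0
    rw [this, Matrix.mulVec_zero, vnormR_zero, vnormR_zero, mul_zero]
  · have hpos : 0 < vnormR x := lt_of_le_of_ne (vnormR_nonneg x) (Ne.symm h0)
    set y : β → ℝ := (vnormR x)⁻¹ • x with hy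
    have hyn : vnormR y = 1 := by
      rw [hy, vnormR_smul]
      simp [Real.norm_eq_abs, abs_inv, abs_of_pos hpos, inv_mul_cancel₀ h0]
    have h1 := le_specNormR M y hyn
    rw [hy, Matrix.mulVec_smul, vnormR_smul, Real.norm_eq_abs,
      abs_of_pos (inv_pos.mpr hpos)] at h1
    calc vnormR (M.mulVec x) = (vnormR x) * ((vnormR x)⁻¹ * vnormR (M.mulVec x)) := by
          field_simp
      _ ≤ (vnormR x) * specNorm M := mul_le_mul_of_nonneg_left h1 (le_of_lt hpos)
      _ = specNorm M * vnormR x := mul_comm _ _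

lemma sigmaMinC_nonneg (B : Matrix α β ℂ) : 0 ≤ sigmaMinC B :=
  Real.sInf_nonneg (by rintro _ ⟨x, hx, rfl⟩; exact vnormC_nonneg _)

lemma sigmaMinC_le (B : Matrix α β ℂ) (x : β → ℂ) (hx : vnormC x = 1) :
    sigmaMinC B ≤ vnormC (B.mulVec x) := by
  apply csInf_le
  · exact ⟨0, by rintro _ ⟨y, hy, rfl⟩; exact vnormC_nonneg _⟩
  · exact ⟨x, hx, rfl⟩

lemma sigmaMinC_mulVec_ge (B : Matrix α β ℂ) (x : β → ℂ) :
    sigmaMinC B * vnormC x ≤ vnormC (B.mulVec x) := by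
  rcases eq_or_ne (vnormC x) 0 with h0 | h0
  · rw [vnormC_eq_zero h0, Matrix.mulVec_zero, vnormC_zero, vnormC_zero, mul_zero]
  · have hpos : 0 < vnormC x := lt_of_le_of_ne (vnormC_nonneg x) (Ne.symm h0)
    set y : β → ℂ := ((vnormC x)⁻¹ : ℝ) • x with hy
    have hyn : vnormC y = 1 := by
      rw [hy, show ((vnormC x)⁻¹ : ℝ) • x = (((vnormC x)⁻¹ : ℝ) : ℂ) • x by
        ext j; simp [Complex.real_smul]]
      rw [vnormC_smul]
      simp [Complex.norm_real, Real.norm_eq_abs, abs_inv, abs_of_pos hpos, inv_mul_cancel₀ h0]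
    have h1 := sigmaMinC_le B y hyn
    rw [hy, show B.mulVec ((((vnormC x)⁻¹ : ℝ)) • x) = (((vnormC x)⁻¹ : ℝ) : ℂ) • B.mulVec x by
      rw [show ((vnormC x)⁻¹ : ℝ) • x = (((vnormC x)⁻¹ : ℝ) : ℂ) • x by ext j; simp [Complex.real_smul]]
      exact Matrix.mulVec_smul B _ x, vnormC_smul, Complex.norm_real, Real.norm_eq_abs,
      abs_of_pos (inv_pos.mpr hpos)] at h1
    calc sigmaMinC B * vnormC x ≤ ((vnormC x)⁻¹ * vnormC (B.mulVec x)) * vnormC x :=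
          mul_le_mul_of_nonneg_right h1 (le_of_lt hpos)
      _ = vnormC (B.mulVec x) := by field_simp

end op

section mat
variable {α β : Type*} [Fintype α] [Fintype β]

lemma star_mulVec_dot (A : Matrix α β ℂ) (w : β → ℂ) (u : α → ℂ) :
    star (A *ᵥ w) ⬝ᵥ u = star w ⬝ᵥ (Aᴴ *ᵥ u) := by
  rw [star_mulVec, Matrix.dotProduct_mulVec]

lemma mulVec_isometry [DecidableEq β] (U : Matrix α β ℂ) (hU : Uᴴ * U = 1) (v : β → ℂ) :
    vnormC (U *ᵥ v) = vnormC v := by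
  have h : star (U *ᵥ v) ⬝ᵥ (U *ᵥ v) = star v ⬝ᵥ v := by
    rw [star_mulVec_dot, Matrix.mulVec_mulVec, hU, Matrix.one_mulVec]
  have h2 := congrArg Complex.re h
  rw [dot_star_self, dot_star_self] at h2
  exact le_antisymm (le_of_sq_le_sq' (vnormC_nonneg _) (vnormC_nonneg _) h2.le)
    (le_of_sq_le_sq' (vnormC_nonneg _) (vnormC_nonneg _) h2.ge)

lemma proj_contraction (Q : Matrix α α ℂ) (hH : Q.IsHermitian) (hQ : Q * Q = Q)
    (v : α → ℂ) : vnormC (Q *ᵥ v) ≤ vnormC v := by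
  have h : (star (Q *ᵥ v) ⬝ᵥ (Q *ᵥ v)).re = (star v ⬝ᵥ (Q *ᵥ v)).re := by
    rw [star_mulVec_dot, Matrix.mulVec_mulVec, hH.eq, hQ]
  rw [dot_star_self] at h
  have h3 := dot_re_le v (Q *ᵥ v)
  rcases eq_or_ne (vnormC (Q *ᵥ v)) 0 with h0 | h0
  · rw [h0]; exact vnormC_nonneg v
  · have hpos : 0 < vnormC (Q *ᵥ v) := lt_of_le_of_ne (vnormC_nonneg _) (Ne.symm h0)
    nlinarith [vnormC_nonneg v]

lemma transpose_mulVec_le [Nonempty α] [Nonempty β] (M : Matrix α β ℝ) (x : α → ℝ) :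
    vnormR (Mᵀ *ᵥ x) ≤ specNorm M * vnormR x := by
  set v := Mᵀ *ᵥ x with hv
  have h1 : x ⬝ᵥ (M *ᵥ v) = v ⬝ᵥ v := by
    rw [Matrix.dotProduct_mulVec, ← Matrix.mulVec_transpose]
  have h2 : vnormR v ^ 2 ≤ vnormR x * (specNorm M * vnormR v) := by
    rw [← dotR_self, ← h1]
    exact (dotR_le x (M *ᵥ v)).trans
      (mul_le_mul_of_nonneg_left (specNormR_mulVec_le M v) (vnormR_nonneg x))
  rcases eq_or_ne (vnormR v) 0 with h0 | h0
  · rw [h0]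
    exact mul_nonneg (specNormR_nonneg M) (vnormR_nonneg x)
  · have hpos : 0 < vnormR v := lt_of_le_of_ne (vnormR_nonneg _) (Ne.symm h0)
    nlinarith [vnormR_nonneg x]

lemma mapC_transpose_mulVec_le [Nonempty α] [Nonempty β] (M : Matrix α β ℝ) (z : α → ℂ) :
    vnormC ((M.map (fun a => (a : ℂ)))ᵀ *ᵥ z) ≤ specNorm M * vnormC z := by
  set w := (M.map (fun a => (a : ℂ)))ᵀ *ᵥ z with hw
  have hre : ∀ j, (w j).re = (Mᵀ *ᵥ fun i => (z i).re) j := by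
    intro j
    simp [hw, Matrix.mulVec, dotProduct, Complex.re_sum, Complex.mul_re]
  have him : ∀ j, (w j).im = (Mᵀ *ᵥ fun i => (z i).im) j := by
    intro j
    simp [hw, Matrix.mulVec, dotProduct, Complex.im_sum, Complex.mul_im]
  have hsq : vnormC w ^ 2 = vnormR (Mᵀ *ᵥ fun i => (z i).re) ^ 2
      + vnormR (Mᵀ *ᵥ fun i => (z i).im) ^ 2 := by
    rw [vnormC_sq, vnormR_sq, vnormR_sq, ← Finset.sum_add_distrib]
    refine Finset.sum_congr rfl fun j _ => ?_
    rw [← hre, ← him, Complex.sq_norm, Complex.normSq_apply]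
    ring
  have hz : vnormC z ^ 2 = vnormR (fun i => (z i).re) ^ 2 + vnormR (fun i => (z i).im) ^ 2 := by
    rw [vnormC_sq, vnormR_sq, vnormR_sq, ← Finset.sum_add_distrib]
    refine Finset.sum_congr rfl fun j _ => ?_
    rw [Complex.sq_norm, Complex.normSq_apply]
    ring
  refine le_of_sq_le_sq' (vnormC_nonneg _)
    (mul_nonneg (specNormR_nonneg M) (vnormC_nonneg _)) ?_
  rw [hsq, mul_pow, hz, mul_add]
  have b1 : vnormR (Mᵀ *ᵥ fun i => (z i).re) ^ 2 ≤ specNorm M ^ 2 * vnormR (fun i => (z i).re) ^ 2 := by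
    rw [← mul_pow]
    exact pow_le_pow_left₀ (vnormR_nonneg _) (transpose_mulVec_le M _) 2
  have b2 : vnormR (Mᵀ *ᵥ fun i => (z i).im) ^ 2 ≤ specNorm M ^ 2 * vnormR (fun i => (z i).im) ^ 2 := by
    rw [← mul_pow]
    exact pow_le_pow_left₀ (vnormR_nonneg _) (transpose_mulVec_le M _) 2
  exact add_le_add b1 b2

lemma component_le (p : α ⊕ β → ℂ) : vnormC (fun j : β => p (Sum.inr j)) ≤ vnormC p := by
  refine le_of_sq_le_sq' (vnormC_nonneg _) (vnormC_nonneg _) ?_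
  rw [vnormC_sq, vnormC_sq, Fintype.sum_sum_type]
  exact le_add_of_nonneg_left (Finset.sum_nonneg fun _ _ => sq_nonneg _)

end mat

section solve
variable {d' r' : Type*} [Fintype d'] [Fintype r'] [DecidableEq d'] [DecidableEq r']

lemma exists_solution (B : Matrix d' r' ℂ) (c : ℝ) (hc : 0 < c)
    (hB : ∀ y, c * vnormC y ≤ vnormC (B *ᵥ y)) (u : r' → ℂ) :
    ∃ z : d' → ℂ, Bᴴ *ᵥ z = u ∧ vnormC z ≤ vnormC u / c := by
  have hinj : Function.Injective (Bᴴ * B).mulVec := by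
    intro y1 y2 h
    have hsub : (Bᴴ * B) *ᵥ (y1 - y2) = 0 := by
      rw [Matrix.mulVec_sub, h, sub_self]
    have key : star (y1 - y2) ⬝ᵥ ((Bᴴ * B) *ᵥ (y1 - y2)) = 0 := by
      rw [hsub, dotProduct_zero]
    have hBy : vnormC (B *ᵥ (y1 - y2)) ^ 2 = 0 := by
      rw [← dot_star_self]
      have h5 : star (B *ᵥ (y1 - y2)) ⬝ᵥ (B *ᵥ (y1 - y2))
          = star (y1 - y2) ⬝ᵥ ((Bᴴ * B) *ᵥ (y1 - y2)) := by
        rw [star_mulVec_dot, Matrix.mulVec_mulVec]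
      rw [h5, key, Complex.zero_re]
    have h1 : vnormC (B *ᵥ (y1 - y2)) = 0 := by
      exact pow_eq_zero_iff two_ne_zero |>.mp hBy
    have h2 : c * vnormC (y1 - y2) ≤ 0 := h1 ▸ hB (y1 - y2)
    have h3 : vnormC (y1 - y2) = 0 := by
      nlinarith [vnormC_nonneg (y1 - y2)]
    have h4 := vnormC_eq_zero h3
    exact sub_eq_zero.mp h4
  have hM : IsUnit (Bᴴ * B) := mulVec_injective_iff_isUnit.mp hinj
  have hdet : IsUnit (Bᴴ * B).det := (Matrix.isUnit_iff_isUnit_det _).mp hM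
  have hMinv : (Bᴴ * B) * (Bᴴ * B)⁻¹ = 1 := Matrix.mul_nonsing_inv _ hdet
  set y : r' → ℂ := (Bᴴ * B)⁻¹ *ᵥ u with hy
  have hu : (Bᴴ * B) *ᵥ y = u := by
    rw [hy, Matrix.mulVec_mulVec, hMinv, Matrix.one_mulVec]
  refine ⟨B *ᵥ y, ?_, ?_⟩
  · rw [Matrix.mulVec_mulVec, hu]
  · have hkey : vnormC (B *ᵥ y) ^ 2 = (star y ⬝ᵥ u).re := by
      rw [← dot_star_self, star_mulVec_dot, Matrix.mulVec_mulVec, hu]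
    have hCS : (star y ⬝ᵥ u).re ≤ vnormC y * vnormC u := dot_re_le y u
    have hlow : c * vnormC y ≤ vnormC (B *ᵥ y) := hB y
    refine le_of_sq_le_sq' (vnormC_nonneg _) (div_nonneg (vnormC_nonneg _) hc.le) ?_
    rw [div_pow]
    rw [le_div_iff₀ (by positivity)]
    have t1 : vnormC (B *ᵥ y) ^ 2 ≤ vnormC y * vnormC u := hkey ▸ hCS
    rcases eq_or_ne (vnormC (B *ᵥ y)) 0 with hb0 | hb0
    · rw [hb0]
      nlinarith [vnormC_nonneg u]
    · have hbpos : 0 < vnormC (B *ᵥ y) := lt_of_le_of_ne (vnormC_nonneg _) (Ne.symm hb0)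
      have key2 : c * vnormC (B *ᵥ y) ≤ vnormC u := by
        nlinarith [mul_le_mul_of_nonneg_left t1 hc.le,
          mul_nonneg (sub_nonneg.mpr hlow) (vnormC_nonneg u), vnormC_nonneg u]
      nlinarith [mul_nonneg hc.le hbpos.le, vnormC_nonneg u]
end solve

lemma final_numeric {a b t c C ε : ℝ} (ha0 : 0 ≤ a) (hb0 : 0 ≤ b) (ht0 : 0 ≤ t)
    (hc : 0 < c) (hc2 : c ^ 2 = 1 - ε) (hε1 : ε < 1) (hab : b ^ 2 + a ^ 2 = 1)
    (hRC : t ^ 2 ≤ C) (hC0 : 0 ≤ C) :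
    a + t * (b / c) ≤ Real.sqrt (1 + 1 / (1 - ε) * C) := by
  have hsum : a + t * (b / c) = a + (t / c) * b := by ring
  have hsq : (a + (t / c) * b) ^ 2 ≤ 1 + t ^ 2 / c ^ 2 := by
    have hexp : (a + (t / c) * b) ^ 2 ≤ (1 + (t / c) ^ 2) * (a ^ 2 + b ^ 2) := by
      nlinarith [sq_nonneg (b - (t / c) * a)]
    have hab' : a ^ 2 + b ^ 2 = 1 := by linarith
    rw [hab', mul_one] at hexp
    refine hexp.trans ?_
    rw [div_pow]
  have hle : t ^ 2 / c ^ 2 ≤ 1 / (1 - ε) * C := by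
    rw [hc2, one_div, inv_mul_eq_div]
    exact div_le_div_of_nonneg_right hRC (by linarith)
  have h5 : (a + (t / c) * b) ^ 2 ≤ 1 + 1 / (1 - ε) * C := by linarith
  have h7 : 0 ≤ 1 / (1 - ε) * C := mul_nonneg (le_of_lt (one_div_pos.mpr (by linarith))) hC0
  rw [hsum]
  have h6 : 0 ≤ a + (t / c) * b := by positivity
  exact (Real.le_sqrt h6 (by linarith)).mpr h5

/-- SJLT range-finder bound.  The matrix `A` has `n = r + k` columns, indexed by
`Fin r ⊕ Fin k` (so `r < min(m,n)` reads `r < m` and `0 < k`), `d` is the sketch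
dimension, `μ = nα/d`, and `specNormC Σ₂` is `σ_{r+1}(A)`. -/
theorem stmt14 {Ω : Type*} [MeasureSpace Ω] [IsProbabilityMeasure (volume : Measure Ω)]
    {m r k d α : ℕ} (hrm : r < m) (hk : 0 < k) (hd : 0 < d)
    (A U : Matrix (Fin m) (Fin r ⊕ Fin k) ℂ)
    (V : Matrix (Fin r ⊕ Fin k) (Fin r ⊕ Fin k) ℂ)
    (s : Fin r ⊕ Fin k → ℝ)
    (hU : Uᴴ * U = 1) (hV : Vᴴ * V = 1)
    (hs0 : ∀ i, 0 ≤ s i)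
    (hsmono : ∀ i j : Fin (r + k), i ≤ j →
      s (finSumFinEquiv.symm j) ≤ s (finSumFinEquiv.symm i))
    (hA : A = U * Matrix.diagonal (fun i => (s i : ℂ)) * Vᴴ)
    (ε δ : ℝ) (hε : ε ∈ Set.Ioo (0:ℝ) 1) (hδ : δ ∈ Set.Ioo (0:ℝ) 1)
    (μ : ℝ) (hμ : μ = (r + k) * α / d)
    -- the random sketching matrix:
    (R : Ω → Matrix (Fin d) (Fin r ⊕ Fin k) ℝ)
    -- for each outcome, `P ω` is the orthogonal projector onto the column
    -- space of `Y ω = A (R ω)ᵀ`: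
    (P : Ω → Matrix (Fin m) (Fin m) ℂ)
    (hP : ∀ ω, (P ω).IsHermitian ∧ P ω * P ω = P ω ∧
      LinearMap.range (P ω).mulVecLin =
        LinearMap.range (A * ((R ω)ᵀ.map (fun a => (a : ℂ)))).mulVecLin)
    -- with probability at least `1 − δ`, both the norm bound and the smallest
    -- singular value bound hold:
    (hevent : ENNReal.ofReal (1 - δ) ≤
      volume {ω |
        specNorm (R ω) ^ 2 ≤
          max (Real.exp 1 ^ 2 * μ) (Real.log (2 * d / δ) - μ) ∧
        1 - ε ≤ sigmaMinC (((R ω).map (fun a => (a : ℂ))) *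
          V.submatrix id Sum.inl) ^ 2}) :
    ENNReal.ofReal (1 - δ) ≤
      volume {ω |
        specNormC ((1 - P ω) * A) ≤
          specNormC (Matrix.diagonal (fun i : Fin k => (s (Sum.inr i) : ℂ))) *
            Real.sqrt (1 + (1 / (1 - ε)) *
              max (Real.exp 1 ^ 2 * (r + k) * α / d)
                  (Real.log (2 * d / δ) - (r + k) * α / d))} := by
  obtain ⟨hε0, hε1⟩ := hε
  obtain ⟨hδ0, hδ1⟩ := hδ
  haveI : Nonempty (Fin k) := ⟨⟨0, hk⟩⟩
  haveI : Nonempty (Fin d) := ⟨⟨0, hd⟩⟩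
  haveI : Nonempty (Fin r ⊕ Fin k) := ⟨Sum.inr ⟨0, hk⟩⟩
  refine le_trans hevent (measure_mono ?_)
  intro ω hω
  obtain ⟨hR, hσ⟩ := hω
  simp only [Set.mem_setOf_eq]
  -- dispose of the degenerate case r = 0
  rcases Nat.eq_zero_or_pos r with hr0 | hrpos
  · exfalso
    subst hr0
    have hempty : {c : ℝ | ∃ x : Fin 0 → ℂ, vnormC x = 1 ∧
        c = vnormC ((((R ω).map (fun a => (a : ℂ))) * V.submatrix id Sum.inl).mulVec x)} = ∅ := by
      ext c
      simp only [Set.mem_setOf_eq, Set.mem_empty_iff_false, iff_false]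
      rintro ⟨x, hx, -⟩
      rw [vnormC] at hx
      simp at hx
    rw [sigmaMinC, hempty, Real.sInf_empty] at hσ
    norm_num at hσ
    linarith
  haveI : Nonempty (Fin r) := ⟨⟨0, hrpos⟩⟩
  -- notation
  set C : ℝ := max (Real.exp 1 ^ 2 * μ) (Real.log (2 * d / δ) - μ) with hC
  have hμ0 : 0 ≤ μ := by rw [hμ]; positivity
  have hC0 : 0 ≤ C := le_trans (by positivity) (le_max_left _ _)
  have hCgoal : max (Real.exp 1 ^ 2 * (r + k) * α / d)
      (Real.log (2 * d / δ) - (r + k) * α / d) = C := by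
    rw [hC, hμ]
    congr 1
    ring
  set Rc : Matrix (Fin d) (Fin r ⊕ Fin k) ℂ := (R ω).map (fun a => (a : ℂ)) with hRc
  set V₁ : Matrix (Fin r ⊕ Fin k) (Fin r) ℂ := V.submatrix id Sum.inl with hV₁
  set B : Matrix (Fin d) (Fin r) ℂ := Rc * V₁ with hB
  set c : ℝ := Real.sqrt (1 - ε) with hcdef
  have hc : 0 < c := Real.sqrt_pos.mpr (by linarith)
  have hc2 : c ^ 2 = 1 - ε := Real.sq_sqrt (by linarith)
  have hσ' : c ≤ sigmaMinC B := by
    have h1 : c ≤ Real.sqrt (sigmaMinC B ^ 2) := Real.sqrt_le_sqrt hσ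
    rwa [Real.sqrt_sq (sigmaMinC_nonneg B)] at h1
  have hBlow : ∀ y, c * vnormC y ≤ vnormC (B *ᵥ y) := fun y =>
    le_trans (mul_le_mul_of_nonneg_right hσ' (vnormC_nonneg y)) (sigmaMinC_mulVec_ge B y)
  set σ₂ : ℝ := specNormC (Matrix.diagonal (fun i : Fin k => (s (Sum.inr i) : ℂ))) with hσ₂
  have hσ₂0 : 0 ≤ σ₂ := specNormC_nonneg _
  rw [hCgoal]
  have hrhs0 : 0 ≤ σ₂ * Real.sqrt (1 + 1 / (1 - ε) * C) :=
    mul_nonneg hσ₂0 (Real.sqrt_nonneg _)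
  refine specNormC_le _ hrhs0 ?_
  intro x hx
  -- decompose x
  set p : Fin r ⊕ Fin k → ℂ := Vᴴ *ᵥ x with hp
  set u : Fin r → ℂ := fun i => p (Sum.inl i) with hu
  set w : Fin k → ℂ := fun i => p (Sum.inr i) with hw
  obtain ⟨z, hz1, hz2⟩ := exists_solution B c hc hBlow u
  set g : (Fin r ⊕ Fin k) → ℂ := x - Rcᵀ *ᵥ z with hg
  -- properties of the projector
  set Q : Matrix (Fin m) (Fin m) ℂ := 1 - P ω with hQ
  obtain ⟨hPH, hPP, hPrange⟩ := hP ω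
  have hQH : Q.IsHermitian := Matrix.isHermitian_one.sub hPH
  have hQQ : Q * Q = Q := by
    rw [hQ, sub_mul, mul_sub, mul_sub, one_mul, mul_one, hPP]
    simp
  set Y : Matrix (Fin m) (Fin d) ℂ := A * ((R ω)ᵀ.map (fun a => (a : ℂ))) with hY
  have hYRc : Y = A * Rcᵀ := by
    rw [hY, hRc, Matrix.transpose_map]
  have hQY : Q *ᵥ (Y *ᵥ z) = 0 := by
    have hmem : Y *ᵥ z ∈ LinearMap.range (P ω).mulVecLin := by
      rw [hPrange]
      exact ⟨z, rfl⟩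
    obtain ⟨wv, hwv⟩ := hmem
    rw [Matrix.mulVecLin_apply] at hwv
    rw [hQ, Matrix.sub_mulVec, Matrix.one_mulVec, ← hwv, Matrix.mulVec_mulVec, hPP, hwv,
      sub_self]
  -- key algebraic identity
  have hAx : A *ᵥ x = A *ᵥ g + Y *ᵥ z := by
    rw [hYRc, ← Matrix.mulVec_mulVec, ← Matrix.mulVec_add, hg]
    congr 1
    rw [sub_add_cancel]
  have hsplit : ((1 - P ω) * A) *ᵥ x = Q *ᵥ (A *ᵥ g) + Q *ᵥ (Y *ᵥ z) := by
    rw [← Matrix.mulVec_mulVec, hAx, Matrix.mulVec_add, hQ]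
  rw [hsplit, hQY, add_zero]
  have step1 : vnormC (Q *ᵥ (A *ᵥ g)) ≤ vnormC (A *ᵥ g) :=
    proj_contraction Q hQH hQQ _
  -- rewrite A *ᵥ g
  set D : Matrix (Fin r ⊕ Fin k) (Fin r ⊕ Fin k) ℂ :=
    Matrix.diagonal (fun i => (s i : ℂ)) with hD
  set q : Fin r ⊕ Fin k → ℂ := Vᴴ *ᵥ g with hq
  have hAg : A *ᵥ g = U *ᵥ (D *ᵥ q) := by
    rw [hA, Matrix.mulVec_mulVec, Matrix.mulVec_mulVec, Matrix.mul_assoc]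
  have step2 : vnormC (A *ᵥ g) = vnormC (D *ᵥ q) := by
    rw [hAg, mulVec_isometry U hU]
  -- q vanishes on inl
  have hBH : Bᴴ = V₁ᴴ * Rcᵀ := by
    rw [hB, Matrix.conjTranspose_mul]
    congr 1
    rw [hRc]
    ext i j
    simp [Matrix.conjTranspose_apply, Matrix.map_apply, Complex.conj_ofReal]
  have hV₁H : ∀ (v : (Fin r ⊕ Fin k) → ℂ) (i : Fin r),
      (V₁ᴴ *ᵥ v) i = (Vᴴ *ᵥ v) (Sum.inl i) := by
    intro v i
    rw [hV₁, Matrix.conjTranspose_submatrix]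
    rfl
  have hq_inl : ∀ i, q (Sum.inl i) = 0 := by
    intro i
    have h1 : q (Sum.inl i) = p (Sum.inl i) - (Vᴴ *ᵥ (Rcᵀ *ᵥ z)) (Sum.inl i) := by
      rw [hq, hg, Matrix.mulVec_sub, hp]
      rfl
    have h2 : (Vᴴ *ᵥ (Rcᵀ *ᵥ z)) (Sum.inl i) = u i := by
      rw [← hV₁H, Matrix.mulVec_mulVec, ← hBH, hz1]
    rw [h1, h2, hu]
    exact sub_self _
  -- reduce to the k-block
  set w' : Fin k → ℂ := fun i => q (Sum.inr i) with hw'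
  set S₂ : Matrix (Fin k) (Fin k) ℂ :=
    Matrix.diagonal (fun i : Fin k => (s (Sum.inr i) : ℂ)) with hS₂
  have step3 : vnormC (D *ᵥ q) = vnormC (S₂ *ᵥ w') := by
    rw [vnormC, vnormC]
    congr 1
    rw [Fintype.sum_sum_type]
    have hinl : ∀ i : Fin r, ‖(D *ᵥ q) (Sum.inl i)‖ ^ 2 = 0 := by
      intro i
      rw [hD, Matrix.mulVec_diagonal, hq_inl, mul_zero, norm_zero]
      norm_num
    have h2 : ∀ i : Fin k, (D *ᵥ q) (Sum.inr i) = (S₂ *ᵥ w') i := by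
      intro i
      simp [hD, hS₂, Matrix.mulVec_diagonal, hw']
    calc (∑ i, ‖(D *ᵥ q) (Sum.inl i)‖ ^ 2) + (∑ i, ‖(D *ᵥ q) (Sum.inr i)‖ ^ 2)
        = 0 + ∑ i, ‖(S₂ *ᵥ w') i‖ ^ 2 := by
          rw [Finset.sum_congr rfl (fun i _ => hinl i), Finset.sum_const_zero]
          congr 1
          exact Finset.sum_congr rfl fun i _ => by rw [h2]
      _ = _ := zero_add _
  have step4 : vnormC (S₂ *ᵥ w') ≤ σ₂ * vnormC w' := specNormC_mulVec_le _ _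
  -- bound vnormC w'
  set t : ℝ := specNorm (R ω) with ht
  have ht0 : 0 ≤ t := specNormR_nonneg _
  have hw'bound : vnormC w' ≤ vnormC w + t * (vnormC u / c) := by
    have hsub : w' = w - fun i => (Vᴴ *ᵥ (Rcᵀ *ᵥ z)) (Sum.inr i) := by
      funext i
      rw [hw', hq, hg, Matrix.mulVec_sub]
      simp only [Pi.sub_apply]
      rfl
    rw [hsub]
    refine (vnormC_sub_le _ _).trans ?_
    have h1 : vnormC (fun i => (Vᴴ *ᵥ (Rcᵀ *ᵥ z)) (Sum.inr i)) ≤ vnormC (Vᴴ *ᵥ (Rcᵀ *ᵥ z)) :=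
      component_le _
    have hVVH : (Vᴴ)ᴴ * Vᴴ = 1 := by
      rw [Matrix.conjTranspose_conjTranspose]
      exact mul_eq_one_comm.mp hV
    have h2 : vnormC (Vᴴ *ᵥ (Rcᵀ *ᵥ z)) = vnormC (Rcᵀ *ᵥ z) := mulVec_isometry Vᴴ hVVH _
    have h3 : vnormC (Rcᵀ *ᵥ z) ≤ t * vnormC z := by
      rw [hRc, ht]
      exact mapC_transpose_mulVec_le (R ω) z
    have h4 : t * vnormC z ≤ t * (vnormC u / c) := mul_le_mul_of_nonneg_left hz2 ht0
    have := h1.trans (h2.le.trans (h3.trans h4))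
    linarith
  -- norm splitting
  have hp1 : vnormC p = 1 := by
    have hVVH : (Vᴴ)ᴴ * Vᴴ = 1 := by
      rw [Matrix.conjTranspose_conjTranspose]
      exact mul_eq_one_comm.mp hV
    rw [hp, mulVec_isometry Vᴴ hVVH, hx]
  have hsplitnorm : vnormC u ^ 2 + vnormC w ^ 2 = 1 := by
    have := vnormC_sq p
    rw [hp1] at this
    rw [vnormC_sq, vnormC_sq]
    rw [Fintype.sum_sum_type] at this
    rw [← this]
    norm_num
  -- final numeric bound
  set a : ℝ := vnormC w with ha
  set b : ℝ := vnormC u with hb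
  have ha0 : 0 ≤ a := vnormC_nonneg _
  have hb0 : 0 ≤ b := vnormC_nonneg _
  have hfin : a + t * (b / c) ≤ Real.sqrt (1 + 1 / (1 - ε) * C) :=
    final_numeric ha0 hb0 ht0 hc hc2 hε1 hsplitnorm hR hC0
  calc vnormC (Q *ᵥ (A *ᵥ g)) ≤ vnormC (A *ᵥ g) := step1
    _ = vnormC (S₂ *ᵥ w') := by rw [step2, step3]
    _ ≤ σ₂ * vnormC w' := step4
    _ ≤ σ₂ * (a + t * (b / c)) := mul_le_mul_of_nonneg_left hw'bound hσ₂0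
    _ ≤ σ₂ * Real.sqrt (1 + 1 / (1 - ε) * C) := mul_le_mul_of_nonneg_left hfin hσ₂0
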